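/- On the open region of Kepler phase space where H > 0 and M ≠ 0, the rescaled integrals K_i = A_i / √(2H) together with M satisfy the so(2,1) commutation relations: {M, K_1} = −K_2, {M, K_2} = K_1, {K_1, K_2} = M, and moreover K_1² + K_2² − M² = 1/(2H). -/

import Mathlib

open scoped BigOperators

/-- Partial derivative in the `q^i` direction on `ℝ^{2n} = (Fin n → ℝ) × (Fin n → ℝ)`. -/
noncomputable def dq {n : ℕ} (f : (Fin n → ℝ) × (Fin n → ℝ) → ℝ) (i : Fin n)
    (x : (Fin n → ℝ) × (Fin n → ℝ)) : ℝ :=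
  fderiv ℝ f x (Pi.single i 1, 0)

/-- Partial derivative in the `p_i` direction. -/
noncomputable def dp {n : ℕ} (f : (Fin n → ℝ) × (Fin n → ℝ) → ℝ) (i : Fin n)
    (x : (Fin n → ℝ) × (Fin n → ℝ)) : ℝ :=
  fderiv ℝ f x (0, Pi.single i 1)

/-- Canonical Poisson bracket `{f,g} = Σ_i (∂_{p_i}f ∂_{q^i}g − ∂_{q^i}f ∂_{p_i}g)`. -/
noncomputable def pb {n : ℕ} (f g : (Fin n → ℝ) × (Fin n → ℝ) → ℝ)
    (x : (Fin n → ℝ) × (Fin n → ℝ)) : ℝ :=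
  ∑ i, (dp f i x * dq g i x - dq f i x * dp g i x)


/-- Kepler Hamiltonian `H = p²/2 − 1/r` on `ℝ⁴` (junk value at `q = 0`). -/
noncomputable def keplerH (x : (Fin 2 → ℝ) × (Fin 2 → ℝ)) : ℝ :=
  (x.2 0 ^ 2 + x.2 1 ^ 2) / 2 - 1 / Real.sqrt (x.1 0 ^ 2 + x.1 1 ^ 2)

/-- Angular momentum `M = q_1 p_2 − q_2 p_1`. -/
def angM (x : (Fin 2 → ℝ) × (Fin 2 → ℝ)) : ℝ :=
  x.1 0 * x.2 1 - x.1 1 * x.2 0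

/-- Runge–Lenz vector components `A_i = q_i p² − p_i (p,q) − q_i/r`. -/
noncomputable def rungeLenz (i : Fin 2) (x : (Fin 2 → ℝ) × (Fin 2 → ℝ)) : ℝ :=
  x.1 i * (x.2 0 ^ 2 + x.2 1 ^ 2) - x.2 i * (x.2 0 * x.1 0 + x.2 1 * x.1 1)
    - x.1 i / Real.sqrt (x.1 0 ^ 2 + x.1 1 ^ 2)

/-- Rescaled Runge–Lenz components `K_i = A_i / √(2H)` on the region `H > 0`. -/
noncomputable def kepK (i : Fin 2) (x : (Fin 2 → ℝ) × (Fin 2 → ℝ)) : ℝ :=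
  rungeLenz i x / Real.sqrt (2 * keplerH x)


section KeplerAux

open ContinuousLinearMap in
private lemma hasF_q (i : Fin 2) (x : (Fin 2 → ℝ) × (Fin 2 → ℝ)) :
    HasFDerivAt (fun y : (Fin 2 → ℝ) × (Fin 2 → ℝ) => y.1 i)
      ((proj i).comp (fst ℝ (Fin 2 → ℝ) (Fin 2 → ℝ))) x :=
  ((proj i).comp (fst ℝ (Fin 2 → ℝ) (Fin 2 → ℝ))).hasFDerivAt

open ContinuousLinearMap in
private lemma hasF_p (i : Fin 2) (x : (Fin 2 → ℝ) × (Fin 2 → ℝ)) :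
    HasFDerivAt (fun y : (Fin 2 → ℝ) × (Fin 2 → ℝ) => y.2 i)
      ((proj i).comp (snd ℝ (Fin 2 → ℝ) (Fin 2 → ℝ))) x :=
  ((proj i).comp (snd ℝ (Fin 2 → ℝ) (Fin 2 → ℝ))).hasFDerivAt

private lemma hasF_r (x : (Fin 2 → ℝ) × (Fin 2 → ℝ)) (h : 0 < x.1 0 ^ 2 + x.1 1 ^ 2) :
    ∃ L : ((Fin 2 → ℝ) × (Fin 2 → ℝ)) →L[ℝ] ℝ,
      HasFDerivAt (fun y : (Fin 2 → ℝ) × (Fin 2 → ℝ) => Real.sqrt (y.1 0 ^ 2 + y.1 1 ^ 2)) L x ∧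
      ∀ v : (Fin 2 → ℝ) × (Fin 2 → ℝ), L v = (x.1 0 * v.1 0 + x.1 1 * v.1 1) * (Real.sqrt (x.1 0 ^ 2 + x.1 1 ^ 2))⁻¹ := by
  have hrne : Real.sqrt (x.1 0 ^ 2 + x.1 1 ^ 2) ≠ 0 := (Real.sqrt_pos.mpr h).ne'
  refine ⟨_, (Real.hasDerivAt_sqrt h.ne').comp_hasFDerivAt x
    (((hasDerivAt_pow 2 (x.1 0)).comp_hasFDerivAt x (hasF_q 0 x)).fun_add
      ((hasDerivAt_pow 2 (x.1 1)).comp_hasFDerivAt x (hasF_q 1 x)) :), fun v => ?_⟩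
  simp only [ContinuousLinearMap.smul_apply, ContinuousLinearMap.add_apply,
    ContinuousLinearMap.coe_comp', ContinuousLinearMap.coe_fst', Function.comp_apply,
    ContinuousLinearMap.proj_apply, smul_eq_mul, Nat.cast_ofNat, pow_one]
  ring

private lemma hasF_H (x : (Fin 2 → ℝ) × (Fin 2 → ℝ)) (h : 0 < x.1 0 ^ 2 + x.1 1 ^ 2) :
    ∃ L : ((Fin 2 → ℝ) × (Fin 2 → ℝ)) →L[ℝ] ℝ,
      HasFDerivAt keplerH L x ∧
      ∀ v : (Fin 2 → ℝ) × (Fin 2 → ℝ), L v = x.2 0 * v.2 0 + x.2 1 * v.2 1 + (x.1 0 * v.1 0 + x.1 1 * v.1 1) * ((Real.sqrt (x.1 0 ^ 2 + x.1 1 ^ 2))⁻¹) ^ 3 := by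
  have hrne : Real.sqrt (x.1 0 ^ 2 + x.1 1 ^ 2) ≠ 0 := (Real.sqrt_pos.mpr h).ne'
  obtain ⟨Lr, hLr, hvr⟩ := hasF_r x h
  have heq : keplerH = fun y : (Fin 2 → ℝ) × (Fin 2 → ℝ) =>
      (y.2 0 ^ 2 + y.2 1 ^ 2) * (2 : ℝ)⁻¹ - (Real.sqrt (y.1 0 ^ 2 + y.1 1 ^ 2))⁻¹ := by
    funext y
    simp only [keplerH, div_eq_mul_inv, one_mul]
  rw [heq]
  refine ⟨_, (((((hasDerivAt_pow 2 (x.2 0)).comp_hasFDerivAt x (hasF_p 0 x)).fun_add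
      ((hasDerivAt_pow 2 (x.2 1)).comp_hasFDerivAt x (hasF_p 1 x))).mul_const
      ((2 : ℝ)⁻¹)).fun_sub ((hasDerivAt_inv hrne).comp_hasFDerivAt x hLr):), fun v => ?_⟩
  simp only [ContinuousLinearMap.sub_apply, ContinuousLinearMap.add_apply,
    ContinuousLinearMap.smul_apply, ContinuousLinearMap.coe_comp',
    ContinuousLinearMap.coe_snd', Function.comp_apply, ContinuousLinearMap.proj_apply,
    smul_eq_mul, Nat.cast_ofNat, pow_one, hvr]
  ring

private lemma hasF_M (x : (Fin 2 → ℝ) × (Fin 2 → ℝ)) :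
    ∃ L : ((Fin 2 → ℝ) × (Fin 2 → ℝ)) →L[ℝ] ℝ,
      HasFDerivAt angM L x ∧
      ∀ v : (Fin 2 → ℝ) × (Fin 2 → ℝ),
        L v = v.1 0 * x.2 1 + x.1 0 * v.2 1 - (v.1 1 * x.2 0 + x.1 1 * v.2 0) := by
  refine ⟨_, ((hasF_q 0 x).mul (hasF_p 1 x)).sub ((hasF_q 1 x).mul (hasF_p 0 x)), fun v => ?_⟩
  simp only [ContinuousLinearMap.sub_apply, ContinuousLinearMap.add_apply,
    ContinuousLinearMap.smul_apply, ContinuousLinearMap.coe_comp',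
    ContinuousLinearMap.coe_fst', ContinuousLinearMap.coe_snd', Function.comp_apply,
    ContinuousLinearMap.proj_apply, smul_eq_mul]
  ring

private lemma hasF_A0 (x : (Fin 2 → ℝ) × (Fin 2 → ℝ)) (h : 0 < x.1 0 ^ 2 + x.1 1 ^ 2) :
    ∃ L : ((Fin 2 → ℝ) × (Fin 2 → ℝ)) →L[ℝ] ℝ,
      HasFDerivAt (rungeLenz 0) L x ∧
      ∀ v : (Fin 2 → ℝ) × (Fin 2 → ℝ), L v = v.1 0 * (x.2 0 ^ 2 + x.2 1 ^ 2) + x.1 0 * (2 * x.2 0 * v.2 0 + 2 * x.2 1 * v.2 1) - v.2 0 * (x.2 0 * x.1 0 + x.2 1 * x.1 1) - x.2 0 * (v.2 0 * x.1 0 + x.2 0 * v.1 0 + v.2 1 * x.1 1 + x.2 1 * v.1 1) - v.1 0 * (Real.sqrt (x.1 0 ^ 2 + x.1 1 ^ 2))⁻¹ + x.1 0 * (x.1 0 * v.1 0 + x.1 1 * v.1 1) * ((Real.sqrt (x.1 0 ^ 2 + x.1 1 ^ 2))⁻¹) ^ 3 := by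
  have hrne : Real.sqrt (x.1 0 ^ 2 + x.1 1 ^ 2) ≠ 0 := (Real.sqrt_pos.mpr h).ne'
  obtain ⟨Lr, hLr, hvr⟩ := hasF_r x h
  have heq : rungeLenz 0 = fun y : (Fin 2 → ℝ) × (Fin 2 → ℝ) =>
      y.1 0 * (y.2 0 ^ 2 + y.2 1 ^ 2) - y.2 0 * (y.2 0 * y.1 0 + y.2 1 * y.1 1)
        - y.1 0 * (Real.sqrt (y.1 0 ^ 2 + y.1 1 ^ 2))⁻¹ := by
    funext y
    simp only [rungeLenz, div_eq_mul_inv]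
  rw [heq]
  refine ⟨_, ((((hasF_q 0 x).fun_mul (((hasDerivAt_pow 2 (x.2 0)).comp_hasFDerivAt x
      (hasF_p 0 x)).fun_add ((hasDerivAt_pow 2 (x.2 1)).comp_hasFDerivAt x (hasF_p 1 x)))).fun_sub
      ((hasF_p 0 x).fun_mul (((hasF_p 0 x).fun_mul (hasF_q 0 x)).fun_add
        ((hasF_p 1 x).fun_mul (hasF_q 1 x))))).fun_sub
      ((hasF_q 0 x).fun_mul ((hasDerivAt_inv hrne).comp_hasFDerivAt x hLr)):), fun v => ?_⟩
  simp only [ContinuousLinearMap.sub_apply, ContinuousLinearMap.add_apply,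
    ContinuousLinearMap.smul_apply, ContinuousLinearMap.coe_comp',
    ContinuousLinearMap.coe_fst', ContinuousLinearMap.coe_snd', Function.comp_apply,
    ContinuousLinearMap.proj_apply, smul_eq_mul, Nat.cast_ofNat, pow_one, hvr]
  ring

private lemma hasF_A1 (x : (Fin 2 → ℝ) × (Fin 2 → ℝ)) (h : 0 < x.1 0 ^ 2 + x.1 1 ^ 2) :
    ∃ L : ((Fin 2 → ℝ) × (Fin 2 → ℝ)) →L[ℝ] ℝ,
      HasFDerivAt (rungeLenz 1) L x ∧
      ∀ v : (Fin 2 → ℝ) × (Fin 2 → ℝ), L v = v.1 1 * (x.2 0 ^ 2 + x.2 1 ^ 2) + x.1 1 * (2 * x.2 0 * v.2 0 + 2 * x.2 1 * v.2 1) - v.2 1 * (x.2 0 * x.1 0 + x.2 1 * x.1 1) - x.2 1 * (v.2 0 * x.1 0 + x.2 0 * v.1 0 + v.2 1 * x.1 1 + x.2 1 * v.1 1) - v.1 1 * (Real.sqrt (x.1 0 ^ 2 + x.1 1 ^ 2))⁻¹ + x.1 1 * (x.1 0 * v.1 0 + x.1 1 * v.1 1) * ((Real.sqrt (x.1 0 ^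 2 + x.1 1 ^ 2))⁻¹) ^ 3 := by
  have hrne : Real.sqrt (x.1 0 ^ 2 + x.1 1 ^ 2) ≠ 0 := (Real.sqrt_pos.mpr h).ne'
  obtain ⟨Lr, hLr, hvr⟩ := hasF_r x h
  have heq : rungeLenz 1 = fun y : (Fin 2 → ℝ) × (Fin 2 → ℝ) =>
      y.1 1 * (y.2 0 ^ 2 + y.2 1 ^ 2) - y.2 1 * (y.2 0 * y.1 0 + y.2 1 * y.1 1)
        - y.1 1 * (Real.sqrt (y.1 0 ^ 2 + y.1 1 ^ 2))⁻¹ := by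
    funext y
    simp only [rungeLenz, div_eq_mul_inv]
  rw [heq]
  refine ⟨_, ((((hasF_q 1 x).fun_mul (((hasDerivAt_pow 2 (x.2 0)).comp_hasFDerivAt x
      (hasF_p 0 x)).fun_add ((hasDerivAt_pow 2 (x.2 1)).comp_hasFDerivAt x (hasF_p 1 x)))).fun_sub
      ((hasF_p 1 x).fun_mul (((hasF_p 0 x).fun_mul (hasF_q 0 x)).fun_add
        ((hasF_p 1 x).fun_mul (hasF_q 1 x))))).fun_sub
      ((hasF_q 1 x).fun_mul ((hasDerivAt_inv hrne).comp_hasFDerivAt x hLr)):), fun v => ?_⟩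
  simp only [ContinuousLinearMap.sub_apply, ContinuousLinearMap.add_apply,
    ContinuousLinearMap.smul_apply, ContinuousLinearMap.coe_comp',
    ContinuousLinearMap.coe_fst', ContinuousLinearMap.coe_snd', Function.comp_apply,
    ContinuousLinearMap.proj_apply, smul_eq_mul, Nat.cast_ofNat, pow_one, hvr]
  ring

private lemma hasF_K0 (x : (Fin 2 → ℝ) × (Fin 2 → ℝ)) (h : 0 < x.1 0 ^ 2 + x.1 1 ^ 2)
    (hH : 0 < keplerH x) :
    ∃ L : ((Fin 2 → ℝ) × (Fin 2 → ℝ)) →L[ℝ] ℝ,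
      HasFDerivAt (kepK 0) L x ∧
      ∀ v : (Fin 2 → ℝ) × (Fin 2 → ℝ), L v = (v.1 0 * (x.2 0 ^ 2 + x.2 1 ^ 2) + x.1 0 * (2 * x.2 0 * v.2 0 + 2 * x.2 1 * v.2 1) - v.2 0 * (x.2 0 * x.1 0 + x.2 1 * x.1 1) - x.2 0 * (v.2 0 * x.1 0 + x.2 0 * v.1 0 + v.2 1 * x.1 1 + x.2 1 * v.1 1) - v.1 0 * (Real.sqrt (x.1 0 ^ 2 + x.1 1 ^ 2))⁻¹ + x.1 0 * (x.1 0 * v.1 0 + x.1 1 * v.1 1) * ((Real.sqrt (x.1 0 ^ 2 + x.1 1 ^ 2))⁻¹) ^ 3) * (Real.sqrt (2 * keplerH x))⁻¹ - rungeLenz 0 x * (x.2 0 * v.2 0 + x.2 1 * v.2 1 + (x.1 0 * v.1 0 + x.1 1 * v.1 1) * ((Real.sqrt (x.1 0 ^ 2 + x.1 1 ^ 2))⁻¹) ^ 3) * ((Real.sqrt (2 * keplerH x))⁻¹) ^ 3 := by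
  have h2H : (0 : ℝ) < 2 * keplerH x := by linarith
  have hsne : Real.sqrt (2 * keplerH x) ≠ 0 := (Real.sqrt_pos.mpr h2H).ne'
  obtain ⟨LA, hLA, hvA⟩ := hasF_A0 x h
  obtain ⟨LH, hLH, hvH⟩ := hasF_H x h
  have heq : kepK 0 = fun y : (Fin 2 → ℝ) × (Fin 2 → ℝ) =>
      rungeLenz 0 y * (Real.sqrt (2 * keplerH y))⁻¹ := by
    funext y
    simp only [kepK, div_eq_mul_inv]
  rw [heq]
  refine ⟨_, hLA.mul ((hasDerivAt_inv hsne).comp_hasFDerivAt x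
      ((Real.hasDerivAt_sqrt h2H.ne').comp_hasFDerivAt x (hLH.const_mul 2))), fun v => ?_⟩
  simp only [ContinuousLinearMap.add_apply, ContinuousLinearMap.smul_apply,
    smul_eq_mul, hvA, hvH]
  ring

private lemma hasF_K1 (x : (Fin 2 → ℝ) × (Fin 2 → ℝ)) (h : 0 < x.1 0 ^ 2 + x.1 1 ^ 2)
    (hH : 0 < keplerH x) :
    ∃ L : ((Fin 2 → ℝ) × (Fin 2 → ℝ)) →L[ℝ] ℝ,
      HasFDerivAt (kepK 1) L x ∧
      ∀ v : (Fin 2 → ℝ) × (Fin 2 → ℝ), L v = (v.1 1 * (x.2 0 ^ 2 + x.2 1 ^ 2) + x.1 1 * (2 * x.2 0 * v.2 0 + 2 * x.2 1 * v.2 1) - v.2 1 * (x.2 0 * x.1 0 + x.2 1 * x.1 1) - x.2 1 * (v.2 0 * x.1 0 + x.2 0 * v.1 0 + v.2 1 * x.1 1 + x.2 1 * v.1 1) - v.1 1 * (Real.sqrt (x.1 0 ^ 2 + x.1 1 ^ 2))⁻¹ + x.1 1 * (x.1 0 * v.1 0 + x.1 1 * v.1 1) * ((Real.sqrt (x.1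 0 ^ 2 + x.1 1 ^ 2))⁻¹) ^ 3) * (Real.sqrt (2 * keplerH x))⁻¹ - rungeLenz 1 x * (x.2 0 * v.2 0 + x.2 1 * v.2 1 + (x.1 0 * v.1 0 + x.1 1 * v.1 1) * ((Real.sqrt (x.1 0 ^ 2 + x.1 1 ^ 2))⁻¹) ^ 3) * ((Real.sqrt (2 * keplerH x))⁻¹) ^ 3 := by
  have h2H : (0 : ℝ) < 2 * keplerH x := by linarith
  have hsne : Real.sqrt (2 * keplerH x) ≠ 0 := (Real.sqrt_pos.mpr h2H).ne'
  obtain ⟨LA, hLA, hvA⟩ := hasF_A1 x h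
  obtain ⟨LH, hLH, hvH⟩ := hasF_H x h
  have heq : kepK 1 = fun y : (Fin 2 → ℝ) × (Fin 2 → ℝ) =>
      rungeLenz 1 y * (Real.sqrt (2 * keplerH y))⁻¹ := by
    funext y
    simp only [kepK, div_eq_mul_inv]
  rw [heq]
  refine ⟨_, hLA.mul ((hasDerivAt_inv hsne).comp_hasFDerivAt x
      ((Real.hasDerivAt_sqrt h2H.ne').comp_hasFDerivAt x (hLH.const_mul 2))), fun v => ?_⟩
  simp only [ContinuousLinearMap.add_apply, ContinuousLinearMap.smul_apply,
    smul_eq_mul, hvA, hvH]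
  ring

end KeplerAux

private lemma alg3 (a b c d r s u t : ℝ) (h1 : r^2 = a^2+b^2)
    (h2 : s^2 = c^2+d^2 - 2*u) (h3 : r*u = 1) (h4 : s*t = 1) :
    3*b*c*u*t^2 + b*c*u^2*t^4 - b*c*d^2*t^2 - b*c*d^2*u*t^4 - b*c^3*t^2 - b*c^3*u*t^4 - b^3*c*u^3*t^2 - b^3*c*u^4*t^4 + b^3*c*d^2*u^3*t^4 + b^3*c^3*u^3*t^4 - 3*a*d*u*t^2 - a*d*u^2*t^4 + a*d^3*t^2 + a*d^3*u*t^4 + a*c^2*d*t^2 + a*c^2*d*u*t^4 + a*b^2*d*u^3*t^2 + a*b^2*d*u^4*t^4 - a*b^2*d^3*u^3*t^4 - a*b^2*c^2*d*u^3*t^4 - a^2*b*c*u^3*t^2 - a^2*b*c*u^4*t^4 + a^2*b*c*d^2*u^3*t^4 + a^2*b*c^3*u^3*t^4 + a^3*d*u^3*t^2 + a^3*d*u^4*t^4 - a^3*d^3*u^3*t^4 - a^3*c^2*d*u^3*t^4 = a*d - b*c := by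
  linear_combination (-b*c*u^4*t^4 + a*d*u^4*t^4) * h1 + (b*c*r^3*u^4*t^4 + b*c*r^4*s^2*u^4*t^4 - b^3*c*r*u^4*t^4 - a*d*r^3*u^4*t^4 - a*d*r^4*s^2*u^4*t^4 + a*b^2*d*r*u^4*t^4 - a^2*b*c*r*u^4*t^4 + a^3*d*r*u^4*t^4) * h2 + (-b*c*s^4*t^4 - 3*b*c*s^4*u*t^6 - b*c*s^4*u^2*t^8 - b*c*r*s^4*u*t^4 - 3*b*c*r*s^4*u^2*t^6 - b*c*r*s^4*u^3*t^8 - 2*b*c*r^2*u^4*t^4 - b*c*r^2*s^4*u^2*t^4 - 3*b*c*r^2*s^4*u^3*t^6 - 2*b*c*r^3*s^2*u^4*t^4 - b*c*r^3*s^4*u^3*t^4 + b*c*d^2*s^4*t^6 + b*c*d^2*s^4*u*t^8 + b*c*d^2*r*s^4*u*t^6 + b*c*d^2*r*s^4*u^2*t^8 + b*c*d^2*r^2*s^4*u^2*t^6 + b*c*d^2*r^2*s^4*u^3*t^8 + b*c*d^2*r^3*s^4*u^3*t^6 + b*c^3*s^4*t^6 + b*c^3*s^4*u*t^8 + b*c^3*r*s^4*u*t^6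 + b*c^3*r*s^4*u^2*t^8 + b*c^3*r^2*s^4*u^2*t^6 + b*c^3*r^2*s^4*u^3*t^8 + b*c^3*r^3*s^4*u^3*t^6 + 2*b^3*c*u^4*t^4 + b^3*c*s^4*u^3*t^6 - b^3*c*d^2*s^4*u^3*t^8 - b^3*c^3*s^4*u^3*t^8 + a*d*s^4*t^4 + 3*a*d*s^4*u*t^6 + a*d*s^4*u^2*t^8 + a*d*r*s^4*u*t^4 + 3*a*d*r*s^4*u^2*t^6 + a*d*r*s^4*u^3*t^8 + 2*a*d*r^2*u^4*t^4 + a*d*r^2*s^4*u^2*t^4 + 3*a*d*r^2*s^4*u^3*t^6 + 2*a*d*r^3*s^2*u^4*t^4 + a*d*r^3*s^4*u^3*t^4 - a*d^3*s^4*t^6 - a*d^3*s^4*u*t^8 - a*d^3*r*s^4*u*t^6 - a*d^3*r*s^4*u^2*t^8 - a*d^3*r^2*s^4*u^2*t^6 - a*d^3*r^2*s^4*u^3*t^8 - a*d^3*r^3*s^4*u^3*t^6 - a*c^2*d*s^4*t^6 - a*c^2*d*s^4*u*t^8 - a*c^2*d*r*s^4*u*t^6 - a*c^2*d*r*s^4*u^2*t^8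 - a*c^2*d*r^2*s^4*u^2*t^6 - a*c^2*d*r^2*s^4*u^3*t^8 - a*c^2*d*r^3*s^4*u^3*t^6 - 2*a*b^2*d*u^4*t^4 - a*b^2*d*s^4*u^3*t^6 + a*b^2*d^3*s^4*u^3*t^8 + a*b^2*c^2*d*s^4*u^3*t^8 + 2*a^2*b*c*u^4*t^4 + a^2*b*c*s^4*u^3*t^6 - a^2*b*c*d^2*s^4*u^3*t^8 - a^2*b*c^3*s^4*u^3*t^8 - 2*a^3*d*u^4*t^4 - a^3*d*s^4*u^3*t^6 + a^3*d^3*s^4*u^3*t^8 + a^3*c^2*d*s^4*u^3*t^8) * h3 + (-b*c - 3*b*c*u*t^2 - b*c*u^2*t^4 - b*c*s*t - 3*b*c*s*u*t^3 - b*c*s*u^2*t^5 - b*c*s^2*t^2 - 3*b*c*s^2*u*t^4 - b*c*s^2*u^2*t^6 - b*c*s^3*t^3 - 3*b*c*s^3*u*t^5 - b*c*s^3*u^2*t^7 + b*c*r^2*u^4*t^4 + b*c*r^2*s*u^4*t^5 + b*c*r^2*s^2*u^4*t^6 + b*c*r^2*s^3*u^4*t^7 + 3*b*c*r^3*s^2*u^4*t^4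 + 3*b*c*r^3*s^3*u^4*t^5 + b*c*d^2*t^2 + b*c*d^2*u*t^4 + b*c*d^2*s*t^3 + b*c*d^2*s*u*t^5 + b*c*d^2*s^2*t^4 + b*c*d^2*s^2*u*t^6 + b*c*d^2*s^3*t^5 + b*c*d^2*s^3*u*t^7 - b*c*d^2*r^3*u^4*t^4 - b*c*d^2*r^3*s*u^4*t^5 - b*c*d^2*r^3*s^2*u^4*t^6 - b*c*d^2*r^3*s^3*u^4*t^7 - b*c*d^2*r^4*s^2*u^4*t^4 - b*c*d^2*r^4*s^3*u^4*t^5 + b*c^3*t^2 + b*c^3*u*t^4 + b*c^3*s*t^3 + b*c^3*s*u*t^5 + b*c^3*s^2*t^4 + b*c^3*s^2*u*t^6 + b*c^3*s^3*t^5 + b*c^3*s^3*u*t^7 - b*c^3*r^3*u^4*t^4 - b*c^3*r^3*s*u^4*t^5 - b*c^3*r^3*s^2*u^4*t^6 - b*c^3*r^3*s^3*u^4*t^7 - b*c^3*r^4*s^2*u^4*t^4 - b*c^3*r^4*s^3*u^4*t^5 + b^3*c*u^3*t^2 + b^3*c*s*u^3*t^3 + b^3*c*s^2*u^3*t^4 +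 b^3*c*s^3*u^3*t^5 - b^3*c*r*s^2*u^4*t^4 - b^3*c*r*s^3*u^4*t^5 - b^3*c*d^2*u^3*t^4 - b^3*c*d^2*s*u^3*t^5 - b^3*c*d^2*s^2*u^3*t^6 - b^3*c*d^2*s^3*u^3*t^7 + b^3*c*d^2*r*u^4*t^4 + b^3*c*d^2*r*s*u^4*t^5 + b^3*c*d^2*r*s^2*u^4*t^6 + b^3*c*d^2*r*s^3*u^4*t^7 - b^3*c^3*u^3*t^4 - b^3*c^3*s*u^3*t^5 - b^3*c^3*s^2*u^3*t^6 - b^3*c^3*s^3*u^3*t^7 + b^3*c^3*r*u^4*t^4 + b^3*c^3*r*s*u^4*t^5 + b^3*c^3*r*s^2*u^4*t^6 + b^3*c^3*r*s^3*u^4*t^7 + a*d + 3*a*d*u*t^2 + a*d*u^2*t^4 + a*d*s*t + 3*a*d*s*u*t^3 + a*d*s*u^2*t^5 + a*d*s^2*t^2 + 3*a*d*s^2*u*t^4 + a*d*s^2*u^2*t^6 + a*d*s^3*t^3 + 3*a*d*s^3*u*t^5 + a*d*s^3*u^2*t^7 - a*d*r^2*u^4*t^4 - a*d*r^2*s*u^4*t^5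 - a*d*r^2*s^2*u^4*t^6 - a*d*r^2*s^3*u^4*t^7 - 3*a*d*r^3*s^2*u^4*t^4 - 3*a*d*r^3*s^3*u^4*t^5 - a*d^3*t^2 - a*d^3*u*t^4 - a*d^3*s*t^3 - a*d^3*s*u*t^5 - a*d^3*s^2*t^4 - a*d^3*s^2*u*t^6 - a*d^3*s^3*t^5 - a*d^3*s^3*u*t^7 + a*d^3*r^3*u^4*t^4 + a*d^3*r^3*s*u^4*t^5 + a*d^3*r^3*s^2*u^4*t^6 + a*d^3*r^3*s^3*u^4*t^7 + a*d^3*r^4*s^2*u^4*t^4 + a*d^3*r^4*s^3*u^4*t^5 - a*c^2*d*t^2 - a*c^2*d*u*t^4 - a*c^2*d*s*t^3 - a*c^2*d*s*u*t^5 - a*c^2*d*s^2*t^4 - a*c^2*d*s^2*u*t^6 - a*c^2*d*s^3*t^5 - a*c^2*d*s^3*u*t^7 + a*c^2*d*r^3*u^4*t^4 + a*c^2*d*r^3*s*u^4*t^5 + a*c^2*d*r^3*s^2*u^4*t^6 + a*c^2*d*r^3*s^3*u^4*t^7 + a*c^2*d*r^4*s^2*u^4*t^4 + a*c^2*d*r^4*s^3*u^4*t^5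 - a*b^2*d*u^3*t^2 - a*b^2*d*s*u^3*t^3 - a*b^2*d*s^2*u^3*t^4 - a*b^2*d*s^3*u^3*t^5 + a*b^2*d*r*s^2*u^4*t^4 + a*b^2*d*r*s^3*u^4*t^5 + a*b^2*d^3*u^3*t^4 + a*b^2*d^3*s*u^3*t^5 + a*b^2*d^3*s^2*u^3*t^6 + a*b^2*d^3*s^3*u^3*t^7 - a*b^2*d^3*r*u^4*t^4 - a*b^2*d^3*r*s*u^4*t^5 - a*b^2*d^3*r*s^2*u^4*t^6 - a*b^2*d^3*r*s^3*u^4*t^7 + a*b^2*c^2*d*u^3*t^4 + a*b^2*c^2*d*s*u^3*t^5 + a*b^2*c^2*d*s^2*u^3*t^6 + a*b^2*c^2*d*s^3*u^3*t^7 - a*b^2*c^2*d*r*u^4*t^4 - a*b^2*c^2*d*r*s*u^4*t^5 - a*b^2*c^2*d*r*s^2*u^4*t^6 - a*b^2*c^2*d*r*s^3*u^4*t^7 + a^2*b*c*u^3*t^2 + a^2*b*c*s*u^3*t^3 + a^2*b*c*s^2*u^3*t^4 + a^2*b*c*s^3*u^3*t^5 - a^2*b*c*r*s^2*u^4*t^4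 - a^2*b*c*r*s^3*u^4*t^5 - a^2*b*c*d^2*u^3*t^4 - a^2*b*c*d^2*s*u^3*t^5 - a^2*b*c*d^2*s^2*u^3*t^6 - a^2*b*c*d^2*s^3*u^3*t^7 + a^2*b*c*d^2*r*u^4*t^4 + a^2*b*c*d^2*r*s*u^4*t^5 + a^2*b*c*d^2*r*s^2*u^4*t^6 + a^2*b*c*d^2*r*s^3*u^4*t^7 - a^2*b*c^3*u^3*t^4 - a^2*b*c^3*s*u^3*t^5 - a^2*b*c^3*s^2*u^3*t^6 - a^2*b*c^3*s^3*u^3*t^7 + a^2*b*c^3*r*u^4*t^4 + a^2*b*c^3*r*s*u^4*t^5 + a^2*b*c^3*r*s^2*u^4*t^6 + a^2*b*c^3*r*s^3*u^4*t^7 - a^3*d*u^3*t^2 - a^3*d*s*u^3*t^3 - a^3*d*s^2*u^3*t^4 - a^3*d*s^3*u^3*t^5 + a^3*d*r*s^2*u^4*t^4 + a^3*d*r*s^3*u^4*t^5 + a^3*d^3*u^3*t^4 + a^3*d^3*s*u^3*t^5 + a^3*d^3*s^2*u^3*t^6 + a^3*d^3*s^3*u^3*t^7 - a^3*d^3*r*u^4*t^4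 - a^3*d^3*r*s*u^4*t^5 - a^3*d^3*r*s^2*u^4*t^6 - a^3*d^3*r*s^3*u^4*t^7 + a^3*c^2*d*u^3*t^4 + a^3*c^2*d*s*u^3*t^5 + a^3*c^2*d*s^2*u^3*t^6 + a^3*c^2*d*s^3*u^3*t^7 - a^3*c^2*d*r*u^4*t^4 - a^3*c^2*d*r*s*u^4*t^5 - a^3*c^2*d*r*s^2*u^4*t^6 - a^3*c^2*d*r*s^3*u^4*t^7) * h4

private lemma alg4 (a b c d r s u t : ℝ) (h1 : r^2 = a^2+b^2)
    (h2 : s^2 = c^2+d^2 - 2*u) (h3 : r*u = 1) (h4 : s*t = 1) :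
    ((a*(c^2+d^2) - c*(c*a+d*b) - a*u)*t)^2 + ((b*(c^2+d^2) - d*(c*a+d*b) - b*u)*t)^2 - (a*d-b*c)^2 = t^2 := by
  linear_combination (-u^2*t^2) * h1 + (-b^2*c^2*r^2*u^2*t^2 + 2*a*b*c*d*r^2*u^2*t^2 - a^2*d^2*r^2*u^2*t^2) * h2 + (s^2*t^4 + r*s^2*u*t^4 + b^2*c^2*s^2*t^2 + 2*b^2*c^2*s^2*u*t^4 + 2*b^2*c^2*r*u^2*t^2 + b^2*c^2*r*s^2*u*t^2 - b^2*c^2*d^2*s^2*t^4 - b^2*c^2*d^2*r*s^2*u*t^4 - b^2*c^4*s^2*t^4 - b^2*c^4*r*s^2*u*t^4 - 2*a*b*c*d*s^2*t^2 - 4*a*b*c*d*s^2*u*t^4 - 4*a*b*c*d*r*u^2*t^2 - 2*a*b*c*d*r*s^2*u*t^2 + 2*a*b*c*d^3*s^2*t^4 + 2*a*b*c*d^3*r*s^2*u*t^4 + 2*a*b*c^3*d*s^2*t^4 + 2*a*b*c^3*d*r*s^2*u*t^4 + a^2*d^2*s^2*t^2 + 2*a^2*d^2*s^2*u*t^4 +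 2*a^2*d^2*r*u^2*t^2 + a^2*d^2*r*s^2*u*t^2 - a^2*d^4*s^2*t^4 - a^2*d^4*r*s^2*u*t^4 - a^2*c^2*d^2*s^2*t^4 - a^2*c^2*d^2*r*s^2*u*t^4) * h3 + (t^2 + s*t^3 - r^2*u^2*t^2 - r^2*s*u^2*t^3 + b^2*c^2 + 2*b^2*c^2*u*t^2 + b^2*c^2*s*t + 2*b^2*c^2*s*u*t^3 - 2*b^2*c^2*r*u^2*t^2 - 2*b^2*c^2*r*s*u^2*t^3 - b^2*c^2*d^2*t^2 - b^2*c^2*d^2*s*t^3 + b^2*c^2*d^2*r^2*u^2*t^2 + b^2*c^2*d^2*r^2*s*u^2*t^3 - b^2*c^4*t^2 - b^2*c^4*s*t^3 + b^2*c^4*r^2*u^2*t^2 + b^2*c^4*r^2*s*u^2*t^3 - 2*a*b*c*d - 4*a*b*c*d*u*t^2 - 2*a*b*c*d*s*t - 4*a*b*c*d*s*u*t^3 + 4*a*b*c*d*r*u^2*t^2 + 4*a*b*c*d*r*s*u^2*t^3 + 2*a*b*c*d^3*t^2 + 2*a*b*c*d^3*s*t^3 - 2*a*b*c*d^3*r^2*u^2*t^2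 - 2*a*b*c*d^3*r^2*s*u^2*t^3 + 2*a*b*c^3*d*t^2 + 2*a*b*c^3*d*s*t^3 - 2*a*b*c^3*d*r^2*u^2*t^2 - 2*a*b*c^3*d*r^2*s*u^2*t^3 + a^2*d^2 + 2*a^2*d^2*u*t^2 + a^2*d^2*s*t + 2*a^2*d^2*s*u*t^3 - 2*a^2*d^2*r*u^2*t^2 - 2*a^2*d^2*r*s*u^2*t^3 - a^2*d^4*t^2 - a^2*d^4*s*t^3 + a^2*d^4*r^2*u^2*t^2 + a^2*d^4*r^2*s*u^2*t^3 - a^2*c^2*d^2*t^2 - a^2*c^2*d^2*s*t^3 + a^2*c^2*d^2*r^2*u^2*t^2 + a^2*c^2*d^2*r^2*s*u^2*t^3) * h4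


/-- On the region `H > 0`, `M ≠ 0`, the integrals `(M, K_1, K_2)` satisfy the
`so(2,1)` commutation relations, and `K² − M² = 1/(2H)`. -/
theorem kepler_so21_relations :
    ∀ x : (Fin 2 → ℝ) × (Fin 2 → ℝ), x.1 ≠ 0 → 0 < keplerH x → angM x ≠ 0 →
      pb angM (kepK 0) x = -(kepK 1 x) ∧
      pb angM (kepK 1) x = kepK 0 x ∧
      pb (kepK 0) (kepK 1) x = angM x ∧
      kepK 0 x ^ 2 + kepK 1 x ^ 2 - angM x ^ 2 = 1 / (2 * keplerH x) := by
  intro x hx hH hM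
  have hr2 : 0 < x.1 0 ^ 2 + x.1 1 ^ 2 := by
    rcases Function.ne_iff.mp hx with ⟨i, hi⟩
    have hi' : x.1 i ≠ 0 := hi
    have h01 : i = 0 ∨ i = 1 := by omega
    rcases h01 with h | h <;> subst h <;>
      nlinarith [sq_nonneg (x.1 0), sq_nonneg (x.1 1), pow_two_pos_of_ne_zero hi']
  have h2H : (0 : ℝ) < 2 * keplerH x := by linarith
  have hr : (0 : ℝ) < Real.sqrt (x.1 0 ^ 2 + x.1 1 ^ 2) := Real.sqrt_pos.mpr hr2
  have hs : (0 : ℝ) < Real.sqrt (2 * keplerH x) := Real.sqrt_pos.mpr h2H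
  have h1 : Real.sqrt (x.1 0 ^ 2 + x.1 1 ^ 2) ^ 2 = x.1 0 ^ 2 + x.1 1 ^ 2 :=
    Real.sq_sqrt hr2.le
  have hs2 : Real.sqrt (2 * keplerH x) ^ 2 = 2 * keplerH x := Real.sq_sqrt h2H.le
  have h2 : Real.sqrt (2 * keplerH x) ^ 2
      = x.2 0 ^ 2 + x.2 1 ^ 2 - 2 * (Real.sqrt (x.1 0 ^ 2 + x.1 1 ^ 2))⁻¹ := by
    rw [hs2]
    simp only [keplerH]
    ring
  have h3 : Real.sqrt (x.1 0 ^ 2 + x.1 1 ^ 2) * (Real.sqrt (x.1 0 ^ 2 + x.1 1 ^ 2))⁻¹ = 1 :=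
    mul_inv_cancel₀ hr.ne'
  have h4 : Real.sqrt (2 * keplerH x) * (Real.sqrt (2 * keplerH x))⁻¹ = 1 :=
    mul_inv_cancel₀ hs.ne'
  obtain ⟨LM, hLM, hvM⟩ := hasF_M x
  obtain ⟨L0, hL0, hv0⟩ := hasF_K0 x hr2 hH
  obtain ⟨L1, hL1, hv1⟩ := hasF_K1 x hr2 hH
  have e00 : (Pi.single (0 : Fin 2) (1 : ℝ) : Fin 2 → ℝ) 0 = 1 := Pi.single_eq_same _ _
  have e01 : (Pi.single (0 : Fin 2) (1 : ℝ) : Fin 2 → ℝ) 1 = 0 := Pi.single_eq_of_ne (by decide) _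
  have e10 : (Pi.single (1 : Fin 2) (1 : ℝ) : Fin 2 → ℝ) 0 = 0 := Pi.single_eq_of_ne (by decide) _
  have e11 : (Pi.single (1 : Fin 2) (1 : ℝ) : Fin 2 → ℝ) 1 = 1 := Pi.single_eq_same _ _
  refine ⟨?_, ?_, ?_, ?_⟩
  · simp only [pb, Fin.sum_univ_two, dq, dp, hLM.fderiv, hL0.fderiv, hvM, hv0]
    simp only [kepK, rungeLenz, e00, e01, e10, e11, Pi.zero_apply, Prod.fst, Prod.snd]
    ring
  · simp only [pb, Fin.sum_univ_two, dq, dp, hLM.fderiv, hL1.fderiv, hvM, hv1]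
    simp only [kepK, rungeLenz, e00, e01, e10, e11, Pi.zero_apply, Prod.fst, Prod.snd]
    ring
  · simp only [pb, Fin.sum_univ_two, dq, dp, hL0.fderiv, hL1.fderiv, hv0, hv1]
    simp only [angM, rungeLenz, e00, e01, e10, e11, Pi.zero_apply, Prod.fst, Prod.snd]
    linear_combination alg3 (x.1 0) (x.1 1) (x.2 0) (x.2 1)
      (Real.sqrt (x.1 0 ^ 2 + x.1 1 ^ 2)) (Real.sqrt (2 * keplerH x))
      (Real.sqrt (x.1 0 ^ 2 + x.1 1 ^ 2))⁻¹ (Real.sqrt (2 * keplerH x))⁻¹ h1 h2 h3 h4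
  · conv_rhs => rw [← hs2]
    simp only [kepK, rungeLenz, angM]
    linear_combination alg4 (x.1 0) (x.1 1) (x.2 0) (x.2 1)
      (Real.sqrt (x.1 0 ^ 2 + x.1 1 ^ 2)) (Real.sqrt (2 * keplerH x))
      (Real.sqrt (x.1 0 ^ 2 + x.1 1 ^ 2))⁻¹ (Real.sqrt (2 * keplerH x))⁻¹ h1 h2 h3 h4
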